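/- For every infinite set I ⊆ ℕ, the set M_I = ⋃_{n∈I} M_n is dense in [0,1], and the set A_I = [0,1] \ D_I is (upper) porous in ℝ. -/

import Mathlib

open Metric Filter Set Topology

/-- γ(x,R,M): the supremum of radii r>0 of open balls contained in B(x,R) \ M
(equal to 0 if no such ball exists, by `Real.sSup_empty`). -/
noncomputable def porGamma {X : Type*} [MetricSpace X] (x : X) (R : ℝ) (M : Set X) : ℝ :=
  sSup {r : ℝ | 0 < r ∧ ∃ z : X, Metric.ball z r ⊆ Metric.ball x R \ M}

/-- `M` is lower porous at `x`: liminf_{R→0+} 2γ(x,R,M)/R > 0. -/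
def LowerPorousAt {X : Type*} [MetricSpace X] (M : Set X) (x : X) : Prop :=
  0 < Filter.liminf (fun R => 2 * porGamma x R M / R) (nhdsWithin 0 (Set.Ioi 0))

/-- `M` is (upper) porous at `x`: limsup_{R→0+} 2γ(x,R,M)/R > 0. -/
def UpperPorousAt {X : Type*} [MetricSpace X] (M : Set X) (x : X) : Prop :=
  0 < Filter.limsup (fun R => 2 * porGamma x R M / R) (nhdsWithin 0 (Set.Ioi 0))

/-- A set is lower porous if it is lower porous at each of its points. -/
def LowerPorous {X : Type*} [MetricSpace X] (M : Set X) : Prop :=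
  ∀ x ∈ M, LowerPorousAt M x

/-- A set is (upper) porous if it is porous at each of its points. -/
def UpperPorous {X : Type*} [MetricSpace X] (M : Set X) : Prop :=
  ∀ x ∈ M, UpperPorousAt M x

/-- A set is σ-lower porous if it is a countable union of lower porous sets. -/
def SigmaLowerPorous {X : Type*} [MetricSpace X] (A : Set X) : Prop :=
  ∃ f : ℕ → Set X, (∀ n, LowerPorous (f n)) ∧ A = ⋃ n, f n

/-- A set is σ-(upper) porous if it is a countable union of porous sets. -/
def SigmaUpperPorous {X : Type*} [MetricSpace X] (A : Set X) : Prop :=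
  ∃ f : ℕ → Set X, (∀ n, UpperPorous (f n)) ∧ A = ⋃ n, f n

/-- The open sets `D_n ⊆ (0,1)`; `D_0 = ∅` and for `n ≥ 1`,
`D_n = ⋃_{i=0}^{3^{n-1}-1} ((1+3i)/3^n, (2+3i)/3^n)`. -/
noncomputable def Dset : ℕ → Set ℝ
  | 0 => ∅
  | (n + 1) =>
      ⋃ i ∈ Finset.range (3 ^ n),
        Set.Ioo ((1 + 3 * (i : ℝ)) / 3 ^ (n + 1)) ((2 + 3 * (i : ℝ)) / 3 ^ (n + 1))

/-- `M_n = ∂D_n`, the boundary of `D_n` in `ℝ`. -/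
noncomputable def Mset (n : ℕ) : Set ℝ := frontier (Dset n)

/-- `D_I = ⋃_{n ∈ I} D_n`. -/
noncomputable def DsetI (I : Set ℕ) : Set ℝ := ⋃ n ∈ I, Dset n

/-- `M_I = ⋃_{n ∈ I} M_n`. -/
noncomputable def MsetI (I : Set ℕ) : Set ℝ := ⋃ n ∈ I, Mset n

/-- `A_I = [0,1] \ D_I`. -/
noncomputable def AsetI (I : Set ℕ) : Set ℝ := Set.Icc 0 1 \ DsetI I



lemma mem_gamma_le {x R r : ℝ} {M : Set ℝ}
    (hr : 0 < r) (hz : ∃ z : ℝ, ball z r ⊆ ball x R \ M) : r ≤ R := by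
  obtain ⟨z, hz⟩ := hz
  have hR : 0 < R := by
    have h := (hz (mem_ball_self hr)).1
    rw [mem_ball] at h
    exact lt_of_le_of_lt dist_nonneg h
  refine le_of_forall_lt fun t ht => ?_
  rcases le_or_gt t 0 with h | h
  · linarith
  · have h1 := (hz (show z + t ∈ ball z r by
      rw [mem_ball, Real.dist_eq]; rw [show z + t - z = t by ring, abs_of_pos h]; exact ht)).1
    have h2 := (hz (show z - t ∈ ball z r by
      rw [mem_ball, Real.dist_eq]; rw [show z - t - z = -t by ring, abs_neg, abs_of_pos h]; exact ht)).1
    rw [mem_ball, Real.dist_eq, abs_lt] at h1 h2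
    linarith
lemma gamma_ge {x R r z : ℝ} {M : Set ℝ} (hr : 0 < r)
    (h : ball z r ⊆ ball x R \ M) : r ≤ porGamma x R M :=
  le_csSup ⟨R, fun _ hr' => mem_gamma_le hr'.1 hr'.2⟩ ⟨hr, z, h⟩

lemma gamma_le (x R : ℝ) (M : Set ℝ) (hR : 0 ≤ R) : porGamma x R M ≤ R :=
  Real.sSup_le (fun _ hr => mem_gamma_le hr.1 hr.2) hR

lemma exists_index (m : ℕ) {x : ℝ} (hx : x ∈ Icc (0:ℝ) 1) :
    ∃ i : ℕ, i < 3 ^ m ∧ (i : ℝ) / 3 ^ m ≤ x ∧ x ≤ ((i : ℝ) + 1) / 3 ^ m := by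
  obtain ⟨hx0, hx1⟩ := hx
  have h3 : (0:ℝ) < 3 ^ m := by positivity
  have hp : 0 < 3 ^ m := Nat.pow_pos (by norm_num)
  have ha0 : 0 ≤ x * 3 ^ m := by positivity
  refine ⟨min ⌊x * 3 ^ m⌋₊ (3 ^ m - 1), lt_of_le_of_lt (min_le_right _ _) (by omega), ?_, ?_⟩
  · rw [div_le_iff₀ h3]
    calc ((min ⌊x * 3 ^ m⌋₊ (3 ^ m - 1) : ℕ) : ℝ) ≤ (⌊x * 3 ^ m⌋₊ : ℝ) := by
          exact_mod_cast min_le_left _ _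
      _ ≤ x * 3 ^ m := Nat.floor_le ha0
  · rw [le_div_iff₀ h3]
    rcases min_cases ⌊x * 3 ^ m⌋₊ (3 ^ m - 1) with ⟨heq, _⟩ | ⟨heq, _⟩
    · rw [heq]
      exact (Nat.lt_floor_add_one _).le
    · rw [heq]
      have h1 : (1:ℕ) ≤ 3 ^ m := hp
      have : ((3 ^ m - 1 : ℕ) : ℝ) = (3:ℝ) ^ m - 1 := by
        push_cast [Nat.cast_sub h1]; ring
      rw [this]
      nlinarith

lemma key (I : Set ℕ) (m : ℕ) (hm : m + 1 ∈ I) {x : ℝ} (hx : x ∈ AsetI I) :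
    (1:ℝ)/2 ≤ 2 * porGamma x (2 / 3 ^ (m+1)) (AsetI I) / (2 / 3 ^ (m+1)) := by
  obtain ⟨i, hi, h1, h2⟩ := exists_index m hx.1
  have h3 : (0:ℝ) < 3 ^ (m+1) := by positivity
  have h3m : (0:ℝ) < 3 ^ m := by positivity
  set s : ℝ := 3 ^ (m+1) with hs
  set r : ℝ := 1 / (2 * s) with hrdef
  set c : ℝ := (3 * (i:ℝ) + 3/2) / s with hcdef
  have hr : 0 < r := by positivity
  have e1 : c - r = (1 + 3 * (i:ℝ)) / s := by
    rw [hcdef, hrdef]; field_simp; ring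
  have e2 : c + r = (2 + 3 * (i:ℝ)) / s := by
    rw [hcdef, hrdef]; field_simp; ring
  have hball : ball c r ⊆ Ioo ((1 + 3*(i:ℝ)) / s) ((2 + 3*(i:ℝ)) / s) := by
    rw [Real.ball_eq_Ioo, e1, e2]
  have hDI : Ioo ((1 + 3*(i:ℝ)) / s) ((2 + 3*(i:ℝ)) / s) ⊆ DsetI I := by
    intro y hy
    refine mem_iUnion₂.2 ⟨m+1, hm, ?_⟩
    show y ∈ Dset (m+1)
    simp only [Dset]
    exact mem_iUnion₂.2 ⟨i, Finset.mem_range.2 hi, hy⟩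
  -- multiplied-out bounds on x
  have hx1 : 3 * (i:ℝ) ≤ x * s := by
    have := (div_le_iff₀ h3m).1 h1
    rw [hs, pow_succ]; nlinarith
  have hx2 : x * s ≤ 3 * (i:ℝ) + 3 := by
    have := (le_div_iff₀ h3m).1 h2
    rw [hs, pow_succ]; nlinarith
  have hdisj : ball c r ⊆ ball x (2 / s) \ AsetI I := by
    intro y hy
    have hy' := hball hy
    have hy1 : 1 + 3*(i:ℝ) < y * s := (div_lt_iff₀ h3).1 hy'.1
    have hy2 : y * s < 2 + 3*(i:ℝ) := (lt_div_iff₀ h3).1 hy'.2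
    constructor
    · rw [mem_ball, Real.dist_eq, abs_lt]
      constructor
      · rw [show -(2/s) = (-2)/s by ring, div_lt_iff₀ h3]
        nlinarith
      · rw [lt_div_iff₀ h3]
        nlinarith
    · intro hyA
      exact hyA.2 (hDI hy')
  have hγ : r ≤ porGamma x (2/s) (AsetI I) := gamma_ge hr hdisj
  have hRpos : (0:ℝ) < 2 / s := by positivity
  rw [le_div_iff₀ hRpos]
  have : (1:ℝ)/2 * (2/s) = 2 * r := by rw [hrdef]; field_simp
  rw [this]
  linarith

lemma small_scale (I : Set ℕ) (hI : I.Infinite) {ε : ℝ} (hε : 0 < ε) :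
    ∃ m : ℕ, m + 1 ∈ I ∧ (2:ℝ) / 3 ^ (m+1) < ε := by
  obtain ⟨N, hN⟩ : ∃ N : ℕ, 2/ε < 3 ^ N := pow_unbounded_of_one_lt _ (by norm_num)
  obtain ⟨n, hnI, hn⟩ := hI.exists_gt N
  refine ⟨n - 1, by simpa [Nat.sub_add_cancel (by omega : 1 ≤ n)] using hnI, ?_⟩
  have hle : (3:ℝ) ^ N ≤ 3 ^ (n - 1 + 1) :=
    pow_le_pow_right₀ (by norm_num) (by omega)
  have h3 : (0:ℝ) < 3 ^ (n-1+1) := by positivity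
  rw [div_lt_iff₀ h3]
  rw [div_lt_iff₀ hε] at hN
  nlinarith


/-- For infinite `I ⊆ ℕ`, `M_I` is dense in `[0,1]` and `A_I` is (upper) porous. -/
theorem MsetI_dense_and_AsetI_porous (I : Set ℕ) (hI : I.Infinite) :
    Set.Icc (0 : ℝ) 1 ⊆ closure (MsetI I) ∧ UpperPorous (AsetI I) := by
  constructor
  · intro x hx
    rw [Metric.mem_closure_iff]
    intro ε hε
    obtain ⟨m, hmI, hm⟩ := small_scale I hI hε
    obtain ⟨i, hi, h1, h2⟩ := exists_index m hx
    have h3 : (0:ℝ) < 3 ^ (m+1) := by positivity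
    have h3m : (0:ℝ) < 3 ^ m := by positivity
    set s : ℝ := 3 ^ (m+1) with hs
    refine ⟨(1 + 3*(i:ℝ)) / s, ?_, ?_⟩
    · refine mem_iUnion₂.2 ⟨m+1, hmI, ?_⟩
      have hopen : IsOpen (Dset (m+1)) := by
        simp only [Dset]
        exact isOpen_biUnion fun _ _ => isOpen_Ioo
      show (1 + 3*(i:ℝ)) / s ∈ Mset (m+1)
      rw [Mset, hopen.frontier_eq]
      constructor
      · have hlt : (1 + 3*(i:ℝ)) / s < (2 + 3*(i:ℝ)) / s :=
          (div_lt_div_iff_of_pos_right h3).2 (by norm_num)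
        have hsub : Ioo ((1 + 3*(i:ℝ)) / s) ((2 + 3*(i:ℝ)) / s) ⊆ Dset (m+1) := by
          intro y hy
          simp only [Dset]
          exact mem_iUnion₂.2 ⟨i, Finset.mem_range.2 hi, hy⟩
        apply closure_mono hsub
        rw [closure_Ioo hlt.ne]
        exact ⟨le_refl _, hlt.le⟩
      · intro hmem
        simp only [Dset] at hmem
        obtain ⟨j, hj, hmem⟩ := mem_iUnion₂.1 hmem
        have hj1 : (1 + 3*(j:ℝ)) / s < (1 + 3*(i:ℝ)) / s := hmem.1
        have hj2 : (1 + 3*(i:ℝ)) / s < (2 + 3*(j:ℝ)) / s := hmem.2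
        rw [div_lt_div_iff_of_pos_right h3] at hj1 hj2
        have hji : j < i := by exact_mod_cast (by linarith : (j:ℝ) < i)
        have hij : 3 * i < 1 + 3 * j := by exact_mod_cast (by push_cast; linarith : (3 * i : ℝ) < 1 + 3 * j)
        omega
    · rw [Real.dist_eq]
      have hx1 : 3 * (i:ℝ) ≤ x * s := by
        have := (div_le_iff₀ h3m).1 h1
        rw [hs, pow_succ]; nlinarith
      have hx2 : x * s ≤ 3 * (i:ℝ) + 3 := by
        have := (le_div_iff₀ h3m).1 h2
        rw [hs, pow_succ]; nlinarith
      have habs : |x - (1 + 3*(i:ℝ)) / s| ≤ 2 / s := by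
        have heq : x - (1 + 3*(i:ℝ)) / s = (x * s - (1 + 3*(i:ℝ))) / s := by
          field_simp
        rw [heq, abs_div, abs_of_pos h3, div_le_div_iff_of_pos_right h3, abs_le]
        constructor <;> linarith
      exact lt_of_le_of_lt habs hm
  · intro x hx
    show (0:ℝ) < _
    have hbound : IsBoundedUnder (· ≤ ·) (𝓝[>] (0:ℝ))
        (fun R => 2 * porGamma x R (AsetI I) / R) := by
      apply isBoundedUnder_of_eventually_le (a := 2)
      filter_upwards [self_mem_nhdsWithin] with R hR
      have hR : (0:ℝ) < R := hR
      have h := gamma_le x R (AsetI I) hR.le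
      rw [div_le_iff₀ hR]
      linarith
    have hfreq : ∃ᶠ R in 𝓝[>] (0:ℝ), (1:ℝ)/2 ≤ 2 * porGamma x R (AsetI I) / R := by
      rw [(nhdsGT_basis (0:ℝ)).frequently_iff]
      intro ε hε
      obtain ⟨m, hmI, hm⟩ := small_scale I hI hε
      exact ⟨2 / 3 ^ (m+1), ⟨by positivity, hm⟩, key I m hmI hx⟩
    have hle := le_limsup_of_frequently_le hfreq hbound
    calc (0:ℝ) < 1/2 := by norm_num
      _ ≤ _ := hle
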